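/- arXiv:2502.03479 — 2 statements merged into one kernel-verified Lean document; each statement's English description precedes it below -/
import Mathlib

section
/- Matrix convolution of sub-distribution-valued matrices is associative: for matrix measures Q₁, Q₂ (given by matrices of finite measures on [0,∞)) and a bounded measurable matrix function F, (Q₁ * (Q₂ * F))(t) = ((Q₁ * Q₂) * F)(t) for all t ≥ 0, where (Q₁*Q₂) denotes the matrix of convolution measures. -/
open MeasureTheory Finset

/-- Matrix convolution `(Q*F)(t)ᵢⱼ = Σₖ ∫₀ᵗ Fₖⱼ(t−u) dQᵢₖ(u)`. -/
noncomputable def mconv {r : ℕ} (Q : Fin r → Fin r → Measure ℝ)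
    (F : ℝ → Matrix (Fin r) (Fin r) ℝ) : ℝ → Matrix (Fin r) (Fin r) ℝ :=
  fun t => Matrix.of fun i j => ∑ k, ∫ u in Set.Icc (0:ℝ) t, F (t - u) k j ∂(Q i k)

/-- Convolution of two matrices of measures:
`(Q₁*Q₂)ᵢⱼ = Σₖ (Q₁ᵢₖ) ∗ (Q₂ₖⱼ)`. -/
noncomputable def mmconv {r : ℕ} (Q₁ Q₂ : Fin r → Fin r → Measure ℝ) :
    Fin r → Fin r → Measure ℝ :=
  fun i j => ∑ k, Measure.map (fun p : ℝ × ℝ => p.1 + p.2) ((Q₁ i k).prod (Q₂ k j))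

/-- Auxiliary two-variable kernel. -/
noncomputable def Haux (f : ℝ → ℝ) (t : ℝ) : ℝ × ℝ → ℝ :=
  fun p => if 0 ≤ p.1 ∧ p.1 ≤ t ∧ 0 ≤ p.2 ∧ p.2 ≤ t - p.1 then f (t - p.1 - p.2) else 0

lemma Haux_measurable {f : ℝ → ℝ} (hf : Measurable f) (t : ℝ) :
    Measurable (Haux f t) := by
  apply Measurable.ite
  · apply MeasurableSet.inter
    · exact measurableSet_le measurable_const measurable_fst
    apply MeasurableSet.inter
    · exact measurableSet_le measurable_fst measurable_const
    apply MeasurableSet.inter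
    · exact measurableSet_le measurable_const measurable_snd
    · exact measurableSet_le measurable_snd (measurable_const.sub measurable_fst)
  · exact hf.comp ((measurable_const.sub measurable_fst).sub measurable_snd)
  · exact measurable_const

lemma Haux_bound {f : ℝ → ℝ} {C : ℝ} (hC : ∀ s, |f s| ≤ C) (t : ℝ) (p : ℝ × ℝ) :
    |Haux f t p| ≤ C := by
  have hC0 : 0 ≤ C := le_trans (abs_nonneg _) (hC 0)
  unfold Haux
  split_ifs
  · exact hC _
  · simpa using hC0

lemma indicator_eq_integral_Haux (ν : Measure ℝ) (f : ℝ → ℝ) (t u : ℝ) :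
    (Set.Icc (0:ℝ) t).indicator
      (fun u => ∫ v in Set.Icc (0:ℝ) (t-u), f (t-u-v) ∂ν) u
      = ∫ v, Haux f t (u, v) ∂ν := by
  by_cases hu : u ∈ Set.Icc (0:ℝ) t
  · rw [Set.indicator_of_mem hu, ← integral_indicator measurableSet_Icc]
    congr 1
    funext v
    simp only [Haux, Set.indicator, Set.mem_Icc]
    obtain ⟨hu1, hu2⟩ := hu
    split_ifs with h1 h2 h2 <;> first | rfl | (exfalso; tauto)
  · rw [Set.indicator_of_notMem hu]
    simp only [Set.mem_Icc, not_and_or, not_le] at hu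
    have : ∀ v, Haux f t (u, v) = 0 := by
      intro v
      simp only [Haux]
      rw [if_neg]
      rintro ⟨h1, h2, _⟩
      rcases hu with h | h <;> linarith
    simp [this]

/-- Key single-entry associativity lemma. -/
lemma conv_assoc_key (μ ν : Measure ℝ) [IsFiniteMeasure μ] [IsFiniteMeasure ν]
    (hμ : μ (Set.Iio 0) = 0) (hν : ν (Set.Iio 0) = 0)
    (f : ℝ → ℝ) (hf : Measurable f) (C : ℝ) (hC : ∀ s, |f s| ≤ C) (t : ℝ) :
    ∫ u in Set.Icc (0:ℝ) t, (∫ v in Set.Icc (0:ℝ) (t-u), f (t-u-v) ∂ν) ∂μ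
      = ∫ w in Set.Icc (0:ℝ) t, f (t-w)
          ∂(Measure.map (fun p : ℝ × ℝ => p.1 + p.2) (μ.prod ν)) := by
  have hT : Measurable (fun p : ℝ × ℝ => p.1 + p.2) := measurable_fst.add measurable_snd
  have hHmeas := Haux_measurable hf t
  have hHint : Integrable (Haux f t) (μ.prod ν) := by
    refine Integrable.mono' (integrable_const C) hHmeas.aestronglyMeasurable ?_
    filter_upwards with p
    simpa using Haux_bound hC t p
  -- LHS
  have lhs_eq : ∫ u in Set.Icc (0:ℝ) t, (∫ v in Set.Icc (0:ℝ) (t-u), f (t-u-v) ∂ν) ∂μ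
      = ∫ p, Haux f t p ∂(μ.prod ν) := by
    rw [← integral_indicator measurableSet_Icc]
    calc ∫ u, (Set.Icc (0:ℝ) t).indicator
          (fun u => ∫ v in Set.Icc (0:ℝ) (t-u), f (t-u-v) ∂ν) u ∂μ
        = ∫ u, ∫ v, Haux f t (u, v) ∂ν ∂μ := by
          congr 1; funext u; exact indicator_eq_integral_Haux ν f t u
      _ = ∫ p : ℝ × ℝ, Haux f t (p.1, p.2) ∂(μ.prod ν) := by
          exact integral_integral (by exact hHint)
      _ = ∫ p, Haux f t p ∂(μ.prod ν) := by simp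
  -- RHS
  have hae : ∀ᵐ p : ℝ × ℝ ∂(μ.prod ν), 0 ≤ p.1 ∧ 0 ≤ p.2 := by
    have h1 : (μ.prod ν) ((Set.Iio 0) ×ˢ (Set.univ : Set ℝ)) = 0 := by
      rw [Measure.prod_prod, hμ, zero_mul]
    have h2 : (μ.prod ν) ((Set.univ : Set ℝ) ×ˢ (Set.Iio 0)) = 0 := by
      rw [Measure.prod_prod, hν, mul_zero]
    rw [ae_iff]
    refine measure_mono_null ?_ (measure_union_null h1 h2)
    intro p hp
    simp only [Set.mem_setOf_eq, not_and_or, not_le] at hp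
    simp only [Set.mem_union, Set.mem_prod, Set.mem_Iio, Set.mem_univ, and_true, true_and]
    tauto
  have rhs_eq : ∫ w in Set.Icc (0:ℝ) t, f (t-w)
        ∂(Measure.map (fun p : ℝ × ℝ => p.1 + p.2) (μ.prod ν))
      = ∫ p, Haux f t p ∂(μ.prod ν) := by
    have hfm : Measurable (fun w : ℝ => f (t - w)) := by fun_prop
    rw [setIntegral_map measurableSet_Icc hfm.aestronglyMeasurable hT.aemeasurable]
    rw [← integral_indicator (hT measurableSet_Icc)]
    refine integral_congr_ae ?_
    filter_upwards [hae] with p hp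
    obtain ⟨hp1, hp2⟩ := hp
    simp only [Set.indicator, Set.mem_preimage, Set.mem_Icc, Haux]
    split_ifs with h1 h2 h2
    · ring_nf
    · exfalso; apply h2; refine ⟨hp1, ?_, hp2, ?_⟩ <;> linarith [h1.1, h1.2]
    · exfalso; apply h1; constructor <;> linarith [h2.1, h2.2.1, h2.2.2.1, h2.2.2.2]
    · rfl
  rw [lhs_eq, rhs_eq]

lemma integrableOn_inner (ν : Measure ℝ) [IsFiniteMeasure ν] (μ : Measure ℝ)
    [IsFiniteMeasure μ] (f : ℝ → ℝ) (hf : Measurable f) (C : ℝ) (hC : ∀ s, |f s| ≤ C)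
    (t : ℝ) :
    IntegrableOn (fun u => ∫ v in Set.Icc (0:ℝ) (t-u), f (t-u-v) ∂ν)
      (Set.Icc (0:ℝ) t) μ := by
  rw [← integrable_indicator_iff measurableSet_Icc]
  have heq : (Set.Icc (0:ℝ) t).indicator
      (fun u => ∫ v in Set.Icc (0:ℝ) (t-u), f (t-u-v) ∂ν)
      = fun u => ∫ v, Haux f t (u, v) ∂ν := by
    funext u; exact indicator_eq_integral_Haux ν f t u
  rw [heq]
  have hC0 : 0 ≤ C := le_trans (abs_nonneg _) (hC 0)
  refine Integrable.mono' (integrable_const (C * (ν Set.univ).toReal)) ?_ ?_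
  · exact (StronglyMeasurable.integral_prod_right (f := fun u v => Haux f t (u, v))
      (by exact
        (Haux_measurable hf t).stronglyMeasurable)).aestronglyMeasurable
  · filter_upwards with u
    refine norm_integral_le_of_norm_le_const ?_
    filter_upwards with v
    simpa using Haux_bound hC t (u, v)

lemma restrict_finset_sum {ι : Type*} (s : Finset ι) (μ : ι → Measure ℝ) (A : Set ℝ) :
    (∑ k ∈ s, μ k).restrict A = ∑ k ∈ s, (μ k).restrict A := by
  ext B hB
  simp [Measure.restrict_apply hB, Measure.finset_sum_apply]

/-- Associativity of matrix convolution: `Q₁ * (Q₂ * F) = (Q₁ * Q₂) * F` for matrices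
of finite measures supported on `[0,∞)` and bounded measurable `F`. -/
theorem stmt_9 (r : ℕ) (Q₁ Q₂ : Fin r → Fin r → Measure ℝ)
    [∀ i j, IsFiniteMeasure (Q₁ i j)] [∀ i j, IsFiniteMeasure (Q₂ i j)]
    (hsupp₁ : ∀ i j, (Q₁ i j) (Set.Iio (0:ℝ)) = 0)
    (hsupp₂ : ∀ i j, (Q₂ i j) (Set.Iio (0:ℝ)) = 0)
    (F : ℝ → Matrix (Fin r) (Fin r) ℝ)
    (hFmeas : ∀ i j, Measurable fun t => F t i j)
    (hFbdd : ∃ C, ∀ t i j, |F t i j| ≤ C) :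
    ∀ t, 0 ≤ t → mconv Q₁ (mconv Q₂ F) t = mconv (mmconv Q₁ Q₂) F t := by
  obtain ⟨C, hC⟩ := hFbdd
  intro t ht
  ext i j
  simp only [mconv, mmconv, Matrix.of_apply]
  calc ∑ k, ∫ u in Set.Icc (0:ℝ) t,
        (∑ l, ∫ v in Set.Icc (0:ℝ) (t-u), F (t-u-v) l j ∂(Q₂ k l)) ∂(Q₁ i k)
      = ∑ k, ∑ l, ∫ w in Set.Icc (0:ℝ) t, F (t-w) l j
          ∂(Measure.map (fun p : ℝ × ℝ => p.1 + p.2) ((Q₁ i k).prod (Q₂ k l))) := by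
        refine Finset.sum_congr rfl fun k _ => ?_
        rw [integral_finset_sum _ fun l _ =>
          integrableOn_inner (Q₂ k l) (Q₁ i k) (fun s => F s l j)
            (hFmeas l j) C (fun s => hC s l j) t]
        refine Finset.sum_congr rfl fun l _ => ?_
        exact conv_assoc_key (Q₁ i k) (Q₂ k l) (hsupp₁ i k) (hsupp₂ k l)
          (fun s => F s l j) (hFmeas l j) C (fun s => hC s l j) t
    _ = ∑ l, ∑ k, ∫ w in Set.Icc (0:ℝ) t, F (t-w) l j
          ∂(Measure.map (fun p : ℝ × ℝ => p.1 + p.2) ((Q₁ i k).prod (Q₂ k l))) :=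
        Finset.sum_comm
    _ = ∑ l, ∫ w in Set.Icc (0:ℝ) t, F (t-w) l j
          ∂(∑ k, Measure.map (fun p : ℝ × ℝ => p.1 + p.2) ((Q₁ i k).prod (Q₂ k l))) := by
        refine Finset.sum_congr rfl fun l _ => ?_
        rw [restrict_finset_sum]
        refine (integral_finset_sum_measure fun k _ => ?_).symm
        haveI : IsFiniteMeasure
            (Measure.map (fun p : ℝ × ℝ => p.1 + p.2) ((Q₁ i k).prod (Q₂ k l))) :=
          Measure.isFiniteMeasure_map _ _
        have hfm : Measurable (fun w : ℝ => F (t - w) l j) := by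
          exact (hFmeas l j).comp (by fun_prop)
        refine Integrable.mono' (integrable_const C) hfm.aestronglyMeasurable ?_
        filter_upwards with w
        simpa using hC (t - w) l j
end

section
/- Under the setup of the previous statement, if additionally E[M₁(u,x)⁴] ≤ K for all intervals and E[M₁(u,x)²] ≤ F(x) − F(u) for a nondecreasing continuous function F, then E[|S(x)−S(u)|²|S(y)−S(x)|²] ≤ K/m + (F(y)−F(u))², so that for m large the tightness criterion of Billingsley's theorem with exponent 2 holds up to the vanishing term K/m. -/
open MeasureTheory ProbabilityTheory Finset

set_option maxHeartbeats 1600000 in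
/-- Under the setup of the moment decomposition for `S = m^{-1/2} Σₐ Mₐ`, if fourth
moments of increments are bounded by `K` and second moments are dominated by increments
of a nondecreasing continuous `F`, then
`E[|S(x)−S(u)|²|S(y)−S(x)|²] ≤ K/m + (F(y)−F(u))²`. -/
theorem stmt_14 {Ω : Type*} [MeasurableSpace Ω] (μ : Measure Ω) [IsProbabilityMeasure μ]
    (m : ℕ) (hm : 0 < m) (M : Fin m → Ω → ℝ → ℝ)
    (hmeas : ∀ a, Measurable (M a))
    (hindep : iIndepFun M μ)
    (hident : ∀ a b : Fin m, IdentDistrib (M a) (M b) μ μ)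
    (hmean0 : ∀ (a : Fin m) (s t : ℝ), s ≤ t → ∫ ω, (M a ω t - M a ω s) ∂μ = 0)
    (huncorr : ∀ (a : Fin m) (s t s' t' : ℝ), s ≤ t → t ≤ s' → s' ≤ t' →
      ∫ ω, (M a ω t - M a ω s) * (M a ω t' - M a ω s') ∂μ = 0)
    (hint : ∀ (a b : Fin m) (u x y z : ℝ),
      Integrable (fun ω => (M a ω x - M a ω u) ^ 2 * (M b ω z - M b ω y) ^ 2) μ)
    (K : ℝ)
    (h4 : ∀ (a : Fin m) (s t : ℝ), s ≤ t → ∫ ω, (M a ω t - M a ω s) ^ 4 ∂μ ≤ K)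
    (F : ℝ → ℝ) (hFmono : Monotone F) (hFcont : Continuous F)
    (h2 : ∀ (a : Fin m) (s t : ℝ), s ≤ t → ∫ ω, (M a ω t - M a ω s) ^ 2 ∂μ ≤ F t - F s)
    (S : Ω → ℝ → ℝ) (hS : ∀ ω t, S ω t = (m : ℝ) ^ (-(1/2 : ℝ)) * ∑ a, M a ω t)
    (u x y : ℝ) (hux : u < x) (hxy : x < y) (hu : 0 ≤ u) :
    ∫ ω, (S ω x - S ω u) ^ 2 * (S ω y - S ω x) ^ 2 ∂μ ≤ K / m + (F y - F u) ^ 2 := by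
  classical
  have hm0 : (0:ℝ) < (m:ℝ) := by exact_mod_cast hm
  -- measurability facts
  have hMev : ∀ (a : Fin m) (t : ℝ), Measurable fun ω => M a ω t :=
    fun a t => (measurable_pi_apply t).comp (hmeas a)
  have hincm : ∀ (a : Fin m) (s t : ℝ), Measurable fun ω => M a ω t - M a ω s :=
    fun a s t => (hMev a t).sub (hMev a s)
  have htup : ∀ S : Finset (Fin m), Measurable fun ω (i : S) => M i ω :=
    fun S => measurable_pi_lambda _ fun i => hmeas i
  -- a mean-zero increment independent of a function of other coordinates kills the integral
  have hsingle : ∀ (j : Fin m) (s t : ℝ), s ≤ t → ∀ (T : Finset (Fin m)), j ∉ T →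
      ∀ (ψ : ((i : T) → ℝ → ℝ) → ℝ), Measurable ψ →
      ∫ ω, (M j ω t - M j ω s) * ψ (fun i => M i ω) ∂μ = 0 := by
    intro j s t hst T hj ψ hψ
    have hφ : Measurable fun v : ((i : ({j} : Finset (Fin m))) → ℝ → ℝ) =>
        v ⟨j, Finset.mem_singleton_self j⟩ t - v ⟨j, Finset.mem_singleton_self j⟩ s := by
      fun_prop
    have hind := (hindep.indepFun_finset {j} T (by simpa using hj) hmeas).comp hφ hψ
    have h0 : (∫ ω, (M j ω t - M j ω s) * ψ (fun i => M i ω) ∂μ)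
        = (∫ ω, (M j ω t - M j ω s) ∂μ) * ∫ ω, ψ (fun i => M i ω) ∂μ :=
      hind.integral_mul_eq_mul_integral ((hincm j s t).aestronglyMeasurable)
        ((hψ.comp (htup T)).aestronglyMeasurable)
    rw [h0, hmean0 j s t hst, zero_mul]
  -- cross pairing term vanishes
  have hcross : ∀ (a b : Fin m), a ≠ b →
      ∫ ω, ((M a ω x - M a ω u) * (M a ω y - M a ω x)) *
           ((M b ω x - M b ω u) * (M b ω y - M b ω x)) ∂μ = 0 := by
    intro a b hab
    have hφ : Measurable fun f : ℝ → ℝ => (f x - f u) * (f y - f x) := by fun_prop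
    have h0 : (∫ ω, ((M a ω x - M a ω u) * (M a ω y - M a ω x)) *
           ((M b ω x - M b ω u) * (M b ω y - M b ω x)) ∂μ)
        = (∫ ω, (M a ω x - M a ω u) * (M a ω y - M a ω x) ∂μ) *
          ∫ ω, (M b ω x - M b ω u) * (M b ω y - M b ω x) ∂μ :=
      ((hindep.indepFun hab).comp hφ hφ).integral_mul_eq_mul_integral
        (((hincm a u x).mul (hincm a x y)).aestronglyMeasurable)
        (((hincm b u x).mul (hincm b x y)).aestronglyMeasurable)
    rw [h0, huncorr a u x x y hux.le le_rfl hxy.le, zero_mul]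
  -- pair term factorizes
  have hpair : ∀ (a c : Fin m), a ≠ c →
      ∫ ω, (M a ω x - M a ω u)^2 * (M c ω y - M c ω x)^2 ∂μ
      = (∫ ω, (M a ω x - M a ω u)^2 ∂μ) * ∫ ω, (M c ω y - M c ω x)^2 ∂μ := by
    intro a c hac
    have hφ : Measurable fun f : ℝ → ℝ => (f x - f u)^2 := by fun_prop
    have hψ : Measurable fun f : ℝ → ℝ => (f y - f x)^2 := by fun_prop
    exact ((hindep.indepFun hac).comp hφ hψ).integral_mul_eq_mul_integral
      (((hincm a u x).pow_const 2).aestronglyMeasurable)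
      (((hincm c x y).pow_const 2).aestronglyMeasurable)
  -- integrability of the generic quadruple term
  have hTint : ∀ a b c d : Fin m, Integrable (fun ω =>
      (M a ω x - M a ω u) * (M b ω x - M b ω u) *
        ((M c ω y - M c ω x) * (M d ω y - M d ω x))) μ := by
    intro a b c d
    have h1 := hint a c u x x y
    have h2' := hint b d u x x y
    refine ((h1.add h2').div_const 2).mono'
      ((((hincm a u x).mul (hincm b u x)).mul
        ((hincm c x y).mul (hincm d x y))).aestronglyMeasurable) ?_
    filter_upwards with ω
    simp only [Pi.add_apply]
    rw [Real.norm_eq_abs, abs_le]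
    constructor <;>
      nlinarith [sq_nonneg ((M a ω x - M a ω u)*(M c ω y - M c ω x)
          + (M b ω x - M b ω u)*(M d ω y - M d ω x)),
        sq_nonneg ((M a ω x - M a ω u)*(M c ω y - M c ω x)
          - (M b ω x - M b ω u)*(M d ω y - M d ω x))]
  -- fourth moment bound on diagonal term
  have hQ : ∀ a : Fin m, ∫ ω, (M a ω x - M a ω u)^2 * (M a ω y - M a ω x)^2 ∂μ ≤ K := by
    intro a
    have hi1 : Integrable (fun ω => (M a ω x - M a ω u)^4) μ := by
      simpa [← pow_add] using hint a a u x u x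
    have hi2 : Integrable (fun ω => (M a ω y - M a ω x)^4) μ := by
      simpa [← pow_add] using hint a a x y x y
    have hb : ∫ ω, (M a ω x - M a ω u)^2 * (M a ω y - M a ω x)^2 ∂μ
        ≤ ∫ ω, ((M a ω x - M a ω u)^4 + (M a ω y - M a ω x)^4)/2 ∂μ :=
      integral_mono (hint a a u x x y) ((hi1.add hi2).div_const 2)
        (fun ω => by nlinarith [sq_nonneg ((M a ω x - M a ω u)^2 - (M a ω y - M a ω x)^2)])
    have heq : ∫ ω, ((M a ω x - M a ω u)^4 + (M a ω y - M a ω x)^4)/2 ∂μ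
        = ((∫ ω, (M a ω x - M a ω u)^4 ∂μ) + ∫ ω, (M a ω y - M a ω x)^4 ∂μ)/2 := by
      rw [integral_div, integral_add hi1 hi2]
    have h4a := h4 a u x hux.le
    have h4b := h4 a x y hxy.le
    linarith
  -- second moment bounds
  have hA2 : ∀ a : Fin m, 0 ≤ ∫ ω, (M a ω x - M a ω u)^2 ∂μ :=
    fun a => integral_nonneg fun ω => sq_nonneg _
  have hB2 : ∀ a : Fin m, 0 ≤ ∫ ω, (M a ω y - M a ω x)^2 ∂μ :=
    fun a => integral_nonneg fun ω => sq_nonneg _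
  have hFxu : (0:ℝ) ≤ F x - F u := sub_nonneg.2 (hFmono hux.le)
  have hFyx : (0:ℝ) ≤ F y - F x := sub_nonneg.2 (hFmono hxy.le)
  have hP : ∀ a c : Fin m,
      (∫ ω, (M a ω x - M a ω u)^2 ∂μ) * (∫ ω, (M c ω y - M c ω x)^2 ∂μ)
        ≤ (F y - F u)^2 := by
    intro a c
    have h2a := h2 a u x hux.le
    have h2c := h2 c x y hxy.le
    nlinarith [mul_le_mul h2a h2c (hB2 c) hFxu, mul_nonneg hFxu hFyx,
      sq_nonneg (F x - F u), sq_nonneg (F y - F x)]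
  have hZ : (0:ℝ) ≤ (F y - F u)^2 := sq_nonneg _
  have hKnn : 0 ≤ K := le_trans (integral_nonneg fun ω => by positivity) (h4 ⟨0, hm⟩ u x hux.le)
  -- per-term evaluation of the quadruple sum
  have hI : ∀ a b c d : Fin m,
      (∫ ω, (M a ω x - M a ω u) * (M b ω x - M b ω u) *
        ((M c ω y - M c ω x) * (M d ω y - M d ω x)) ∂μ)
      = if a = b ∧ c = d then
          (if a = c then ∫ ω, (M a ω x - M a ω u)^2 * (M a ω y - M a ω x)^2 ∂μ
           else (∫ ω, (M a ω x - M a ω u)^2 ∂μ) * ∫ ω, (M c ω y - M c ω x)^2 ∂μ)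
        else 0 := by
    intro a b c d
    by_cases hab : a = b
    · by_cases hcd : c = d
      · subst hab; subst hcd
        rw [if_pos ⟨rfl, rfl⟩]
        by_cases hac : a = c
        · subst hac
          rw [if_pos rfl]
          exact integral_congr_ae (Filter.Eventually.of_forall fun ω => by ring)
        · rw [if_neg hac]
          rw [show (fun ω => (M a ω x - M a ω u) * (M a ω x - M a ω u) *
              ((M c ω y - M c ω x) * (M c ω y - M c ω x)))
            = fun ω => (M a ω x - M a ω u)^2 * (M c ω y - M c ω x)^2 from
            funext fun ω => by ring]
          exact hpair a c hac
      · -- a = b, c ≠ d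
        subst hab
        rw [if_neg (by tauto)]
        by_cases hac : a = c
        · -- singleton d : d ≠ c = a
          subst hac
          have hda : d ≠ a := fun h => hcd (h.symm)
          refine (integral_congr_ae (Filter.Eventually.of_forall fun ω => ?_)).trans
            (hsingle d x y hxy.le {a} (by simpa using hda)
              (fun v => (v ⟨a, Finset.mem_singleton_self a⟩ x - v ⟨a, Finset.mem_singleton_self a⟩ u) *
                (v ⟨a, Finset.mem_singleton_self a⟩ x - v ⟨a, Finset.mem_singleton_self a⟩ u) *
                (v ⟨a, Finset.mem_singleton_self a⟩ y - v ⟨a, Finset.mem_singleton_self a⟩ x))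
              (by fun_prop))
          dsimp only; ring
        · by_cases had : a = d
          · -- singleton c : c ≠ a, c ≠ d = a
            subst had
            have hca : c ≠ a := fun h => hac h.symm
            refine (integral_congr_ae (Filter.Eventually.of_forall fun ω => ?_)).trans
              (hsingle c x y hxy.le {a} (by simpa using hca)
                (fun v => (v ⟨a, Finset.mem_singleton_self a⟩ x - v ⟨a, Finset.mem_singleton_self a⟩ u) *
                  (v ⟨a, Finset.mem_singleton_self a⟩ x - v ⟨a, Finset.mem_singleton_self a⟩ u) *
                  (v ⟨a, Finset.mem_singleton_self a⟩ y - v ⟨a, Finset.mem_singleton_self a⟩ x))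
                (by fun_prop))
            dsimp only; ring
          · -- singleton c : c ∉ {a, d}
            have hca : c ≠ a := fun h => hac h.symm
            have hadm : a ∈ ({a, d} : Finset (Fin m)) := by simp
            have hddm : d ∈ ({a, d} : Finset (Fin m)) := by simp
            refine (integral_congr_ae (Filter.Eventually.of_forall fun ω => ?_)).trans
              (hsingle c x y hxy.le {a, d}
                (by simp only [Finset.mem_insert, Finset.mem_singleton]; push_neg
                    exact ⟨hca, hcd⟩)
                (fun v => (v ⟨a, hadm⟩ x - v ⟨a, hadm⟩ u) * (v ⟨a, hadm⟩ x - v ⟨a, hadm⟩ u) *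
                  (v ⟨d, hddm⟩ y - v ⟨d, hddm⟩ x))
                (by fun_prop))
            dsimp only; ring
    · -- a ≠ b
      rw [if_neg (by tauto)]
      by_cases hcd : c = d
      · -- c = d, a ≠ b
        subst hcd
        by_cases hac : a = c
        · -- singleton b : b ≠ a = c
          subst hac
          have hba : b ≠ a := fun h => hab h.symm
          refine (integral_congr_ae (Filter.Eventually.of_forall fun ω => ?_)).trans
            (hsingle b u x hux.le {a} (by simpa using hba)
              (fun v => (v ⟨a, Finset.mem_singleton_self a⟩ x - v ⟨a, Finset.mem_singleton_self a⟩ u) *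
                ((v ⟨a, Finset.mem_singleton_self a⟩ y - v ⟨a, Finset.mem_singleton_self a⟩ x) *
                 (v ⟨a, Finset.mem_singleton_self a⟩ y - v ⟨a, Finset.mem_singleton_self a⟩ x)))
              (by fun_prop))
          dsimp only; ring
        · by_cases hbc : b = c
          · -- singleton a : a ≠ b = c
            subst hbc
            refine (integral_congr_ae (Filter.Eventually.of_forall fun ω => ?_)).trans
              (hsingle a u x hux.le {b} (by simpa using hab)
                (fun v => (v ⟨b, Finset.mem_singleton_self b⟩ x - v ⟨b, Finset.mem_singleton_self b⟩ u) *
                  ((v ⟨b, Finset.mem_singleton_self b⟩ y - v ⟨b, Finset.mem_singleton_self b⟩ x) *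
                   (v ⟨b, Finset.mem_singleton_self b⟩ y - v ⟨b, Finset.mem_singleton_self b⟩ x)))
                (by fun_prop))
            dsimp only; ring
          · -- singleton a : a ∉ {b, c}
            have hbcm : b ∈ ({b, c} : Finset (Fin m)) := by simp
            have hccm : c ∈ ({b, c} : Finset (Fin m)) := by simp
            refine (integral_congr_ae (Filter.Eventually.of_forall fun ω => ?_)).trans
              (hsingle a u x hux.le {b, c}
                (by simp only [Finset.mem_insert, Finset.mem_singleton]; push_neg
                    exact ⟨hab, hac⟩)
                (fun v => (v ⟨b, hbcm⟩ x - v ⟨b, hbcm⟩ u) *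
                  ((v ⟨c, hccm⟩ y - v ⟨c, hccm⟩ x) * (v ⟨c, hccm⟩ y - v ⟨c, hccm⟩ x)))
                (by fun_prop))
            dsimp only; ring
      · -- a ≠ b, c ≠ d
        by_cases hac : a = c
        · by_cases hbd : b = d
          · -- cross pairing a = c, b = d
            subst hac; subst hbd
            rw [show (fun ω => (M a ω x - M a ω u) * (M b ω x - M b ω u) *
                ((M a ω y - M a ω x) * (M b ω y - M b ω x)))
              = fun ω => ((M a ω x - M a ω u) * (M a ω y - M a ω x)) *
                  ((M b ω x - M b ω u) * (M b ω y - M b ω x)) from funext fun ω => by ring]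
            exact hcross a b hab
          · -- singleton d : d ≠ c = a, d ≠ b
            subst hac
            have hda : d ≠ a := fun h => hcd h.symm
            have hdb : d ≠ b := fun h => hbd h.symm
            have ham : a ∈ ({a, b} : Finset (Fin m)) := by simp
            have hbm : b ∈ ({a, b} : Finset (Fin m)) := by simp
            refine (integral_congr_ae (Filter.Eventually.of_forall fun ω => ?_)).trans
              (hsingle d x y hxy.le {a, b}
                (by simp only [Finset.mem_insert, Finset.mem_singleton]; push_neg
                    exact ⟨hda, hdb⟩)
                (fun v => (v ⟨a, ham⟩ x - v ⟨a, ham⟩ u) * (v ⟨b, hbm⟩ x - v ⟨b, hbm⟩ u) *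
                  (v ⟨a, ham⟩ y - v ⟨a, ham⟩ x))
                (by fun_prop))
            dsimp only; ring
        · by_cases had : a = d
          · by_cases hbc : b = c
            · -- cross pairing a = d, b = c
              subst had; subst hbc
              rw [show (fun ω => (M a ω x - M a ω u) * (M b ω x - M b ω u) *
                  ((M b ω y - M b ω x) * (M a ω y - M a ω x)))
                = fun ω => ((M a ω x - M a ω u) * (M a ω y - M a ω x)) *
                    ((M b ω x - M b ω u) * (M b ω y - M b ω x)) from funext fun ω => by ring]
              exact hcross a b hab
            · -- singleton c : c ≠ a (= d), c ≠ b
              subst had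
              have hca : c ≠ a := fun h => hac h.symm
              have hcb : c ≠ b := fun h => hbc h.symm
              have ham : a ∈ ({a, b} : Finset (Fin m)) := by simp
              have hbm : b ∈ ({a, b} : Finset (Fin m)) := by simp
              refine (integral_congr_ae (Filter.Eventually.of_forall fun ω => ?_)).trans
                (hsingle c x y hxy.le {a, b}
                  (by simp only [Finset.mem_insert, Finset.mem_singleton]; push_neg
                      exact ⟨hca, hcb⟩)
                  (fun v => (v ⟨a, ham⟩ x - v ⟨a, ham⟩ u) * (v ⟨b, hbm⟩ x - v ⟨b, hbm⟩ u) *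
                    (v ⟨a, ham⟩ y - v ⟨a, ham⟩ x))
                  (by fun_prop))
              dsimp only; ring
          · -- singleton a : a ∉ {b, c, d}
            have hbm : b ∈ ({b, c, d} : Finset (Fin m)) := by simp
            have hcm : c ∈ ({b, c, d} : Finset (Fin m)) := by simp
            have hdm : d ∈ ({b, c, d} : Finset (Fin m)) := by simp
            refine (integral_congr_ae (Filter.Eventually.of_forall fun ω => ?_)).trans
              (hsingle a u x hux.le {b, c, d}
                (by simp only [Finset.mem_insert, Finset.mem_singleton]; push_neg
                    exact ⟨hab, hac, had⟩)
                (fun v => (v ⟨b, hbm⟩ x - v ⟨b, hbm⟩ u) *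
                  ((v ⟨c, hcm⟩ y - v ⟨c, hcm⟩ x) * (v ⟨d, hdm⟩ y - v ⟨d, hdm⟩ x)))
                (by fun_prop))
            dsimp only; ring
  -- rewrite the integrand via S
  have hc2 : ((m:ℝ) ^ (-(1/2):ℝ)) * ((m:ℝ) ^ (-(1/2):ℝ)) = (m:ℝ)⁻¹ := by
    rw [← Real.rpow_add hm0]; norm_num [Real.rpow_neg_one]
  have hcinv : ((m:ℝ) ^ (-(1/2):ℝ))^2 = (m:ℝ)⁻¹ := by rw [sq]; exact hc2
  have hSfun : (fun ω => (S ω x - S ω u)^2 * (S ω y - S ω x)^2)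
      = fun ω => ((m:ℝ)⁻¹ * (m:ℝ)⁻¹) *
          ((∑ a, (M a ω x - M a ω u))^2 * (∑ a, (M a ω y - M a ω x))^2) := by
    funext ω
    have e1 : S ω x - S ω u = ((m:ℝ) ^ (-(1/2):ℝ)) * ∑ a, (M a ω x - M a ω u) := by
      rw [hS ω x, hS ω u, ← mul_sub, ← Finset.sum_sub_distrib]
    have e2 : S ω y - S ω x = ((m:ℝ) ^ (-(1/2):ℝ)) * ∑ a, (M a ω y - M a ω x) := by
      rw [hS ω y, hS ω x, ← mul_sub, ← Finset.sum_sub_distrib]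
    rw [e1, e2, mul_pow, mul_pow, hcinv]; ring
  -- the core bound
  have core : ∫ ω, (∑ a, (M a ω x - M a ω u))^2 * (∑ a, (M a ω y - M a ω x))^2 ∂μ
      ≤ (m:ℝ)*K + (m:ℝ)^2*(F y - F u)^2 := by
    have hexp : (fun ω => (∑ a, (M a ω x - M a ω u))^2 * (∑ a, (M a ω y - M a ω x))^2)
        = fun ω => ∑ a, ∑ b, ∑ c, ∑ d, (M a ω x - M a ω u) * (M b ω x - M b ω u) *
            ((M c ω y - M c ω x) * (M d ω y - M d ω x)) := by
      funext ω
      rw [sq, sq]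
      simp only [Finset.sum_mul_sum]
      exact Finset.sum_congr rfl fun a _ => Finset.sum_comm
    rw [hexp]
    have swap : ∫ ω, (∑ a, ∑ b, ∑ c, ∑ d, (M a ω x - M a ω u) * (M b ω x - M b ω u) *
            ((M c ω y - M c ω x) * (M d ω y - M d ω x))) ∂μ
        = ∑ a : Fin m, ∑ b : Fin m, ∑ c : Fin m, ∑ d : Fin m,
            ∫ ω, (M a ω x - M a ω u) * (M b ω x - M b ω u) *
              ((M c ω y - M c ω x) * (M d ω y - M d ω x)) ∂μ := by
      rw [integral_finset_sum _ (fun a _ => integrable_finset_sum _ fun b _ =>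
        integrable_finset_sum _ fun c _ => integrable_finset_sum _ fun d _ => hTint a b c d)]
      refine Finset.sum_congr rfl fun a _ => ?_
      rw [integral_finset_sum _ (fun b _ =>
        integrable_finset_sum _ fun c _ => integrable_finset_sum _ fun d _ => hTint a b c d)]
      refine Finset.sum_congr rfl fun b _ => ?_
      rw [integral_finset_sum _ (fun c _ => integrable_finset_sum _ fun d _ => hTint a b c d)]
      refine Finset.sum_congr rfl fun c _ => ?_
      rw [integral_finset_sum _ (fun d _ => hTint a b c d)]
    rw [swap]
    have hbound : ∀ a b c d : Fin m,
        (∫ ω, (M a ω x - M a ω u) * (M b ω x - M b ω u) *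
          ((M c ω y - M c ω x) * (M d ω y - M d ω x)) ∂μ)
        ≤ (if a = b ∧ c = d ∧ a = c then K else 0) + (if a = b ∧ c = d then (F y - F u)^2 else 0) := by
      intro a b c d
      rw [hI a b c d]
      split_ifs <;> first | linarith [hQ a, hZ, hP a c] | tauto
    calc ∑ a : Fin m, ∑ b : Fin m, ∑ c : Fin m, ∑ d : Fin m,
            ∫ ω, (M a ω x - M a ω u) * (M b ω x - M b ω u) *
              ((M c ω y - M c ω x) * (M d ω y - M d ω x)) ∂μ
        ≤ ∑ a : Fin m, ∑ b : Fin m, ∑ c : Fin m, ∑ d : Fin m,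
            ((if a = b ∧ c = d ∧ a = c then K else 0) +
             (if a = b ∧ c = d then (F y - F u)^2 else 0)) := by
          refine Finset.sum_le_sum fun a _ => Finset.sum_le_sum fun b _ =>
            Finset.sum_le_sum fun c _ => Finset.sum_le_sum fun d _ => hbound a b c d
      _ = (m:ℝ)*K + (m:ℝ)^2*(F y - F u)^2 := by
          simp only [Finset.sum_add_distrib]
          have e1 : ∑ a : Fin m, ∑ b : Fin m, ∑ c : Fin m, ∑ d : Fin m,
              (if a = b ∧ c = d ∧ a = c then K else 0) = (m:ℝ)*K := by
            simp [ite_and, Finset.sum_ite_eq, Finset.card_univ]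
          have e2 : ∑ a : Fin m, ∑ b : Fin m, ∑ c : Fin m, ∑ d : Fin m,
              (if a = b ∧ c = d then (F y - F u)^2 else 0) = (m:ℝ)^2*(F y - F u)^2 := by
            simp [ite_and, Finset.sum_ite_eq, Finset.card_univ]
            ring
          rw [e1, e2]
  -- put everything together
  rw [hSfun, integral_const_mul]
  have hfinal : (m:ℝ)⁻¹ * (m:ℝ)⁻¹ * ((m:ℝ)*K + (m:ℝ)^2*(F y - F u)^2)
      = K/(m:ℝ) + (F y - F u)^2 := by
    field_simp
  calc (m:ℝ)⁻¹ * (m:ℝ)⁻¹ * ∫ ω, (∑ a, (M a ω x - M a ω u))^2 * (∑ a, (M a ω y - M a ω x))^2 ∂μ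
      ≤ (m:ℝ)⁻¹ * (m:ℝ)⁻¹ * ((m:ℝ)*K + (m:ℝ)^2*(F y - F u)^2) := by
        apply mul_le_mul_of_nonneg_left core (by positivity)
    _ = K/(m:ℝ) + (F y - F u)^2 := hfinal
end
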